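/- Let X : [0,∞) → ℝ^d be continuous and bounded, and suppose lim_{t→∞} (1/t) ∫_0^t ⟨X(s), f(X(s))⟩ ds = 0. Then liminf_{t→∞} ‖X(t)‖ = 0. -/

import Mathlib

open Filter MeasureTheory

theorem stmt_19 (d : ℕ) (hd : 1 ≤ d)
    (f : EuclideanSpace ℝ (Fin d) → EuclideanSpace ℝ (Fin d)) (hf : Continuous f)
    (hf0 : f 0 = 0)
    (hdiss : ∀ x : EuclideanSpace ℝ (Fin d), x ≠ 0 → 0 < (inner ℝ x (f x) : ℝ))
    (X : ℝ → EuclideanSpace ℝ (Fin d)) (hX : ContinuousOn X (Set.Ici 0))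
    (hbdd : ∃ C : ℝ, ∀ t : ℝ, 0 ≤ t → ‖X t‖ ≤ C)
    (havg : Tendsto
      (fun t : ℝ => (1 / t) * ∫ s in (0 : ℝ)..t, (inner ℝ (X s) (f (X s)) : ℝ))
      atTop (nhds 0)) :
    liminf (fun t : ℝ => ‖X t‖) atTop = 0 := by
  set g : EuclideanSpace ℝ (Fin d) → ℝ := fun x => inner ℝ x (f x) with hg
  have hgcont : Continuous g := continuous_id.inner hf
  have hgnonneg : ∀ x, 0 ≤ g x := by
    intro x
    by_cases hx : x = 0
    · simp [hg, hx, hf0]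
    · exact (hdiss x hx).le
  obtain ⟨C, hC⟩ := hbdd
  have hC0 : 0 ≤ C := le_trans (norm_nonneg _) (hC 0 le_rfl)
  have hbd : IsBoundedUnder (· ≤ ·) atTop (fun t => ‖X t‖) :=
    ⟨C, eventually_map.mpr (by
      filter_upwards [eventually_ge_atTop (0:ℝ)] with t ht using hC t ht)⟩
  have hbd' : IsBoundedUnder (· ≥ ·) atTop (fun t => ‖X t‖) :=
    ⟨0, eventually_map.mpr (Eventually.of_forall fun t => norm_nonneg _)⟩
  have hcobdd : IsCoboundedUnder (· ≥ ·) atTop (fun t => ‖X t‖) :=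
    hbd.isCoboundedUnder_ge
  refine le_antisymm ?_ (le_liminf_of_le hcobdd (by
    filter_upwards with t using norm_nonneg _))
  by_contra hlt
  push_neg at hlt
  set L := liminf (fun t : ℝ => ‖X t‖) atTop with hL
  have hε : (0:ℝ) < L / 2 := by linarith
  set ε := L / 2 with hεdef
  have hev : ∀ᶠ t in atTop, ε < ‖X t‖ :=
    eventually_lt_of_lt_liminf (by simp only [hεdef]; linarith) hbd'
  obtain ⟨T₀, hT₀⟩ := eventually_atTop.mp hev
  set T := max T₀ 0 with hT
  have hT0 : (0:ℝ) ≤ T := le_max_right _ _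
  have hTlow : ∀ t, T ≤ t → ε < ‖X t‖ := fun t ht =>
    hT₀ t (le_trans (le_max_left _ _) ht)
  -- compact annulus
  set K : Set (EuclideanSpace ℝ (Fin d)) :=
    Metric.closedBall 0 C \ Metric.ball 0 ε with hK
  have hKc : IsCompact K := (isCompact_closedBall 0 C).diff Metric.isOpen_ball
  have hmemK : ∀ t, T ≤ t → X t ∈ K := by
    intro t ht
    constructor
    · simpa [Metric.mem_closedBall, dist_eq_norm] using hC t (le_trans hT0 ht)
    · simp only [Metric.mem_ball, dist_eq_norm, sub_zero, not_lt]
      exact (hTlow t ht).le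
  have hKne : K.Nonempty := ⟨X T, hmemK T le_rfl⟩
  obtain ⟨x₀, hx₀K, hmin⟩ := hKc.exists_isMinOn hKne hgcont.continuousOn
  set δ := g x₀ with hδ
  have hx₀ne : x₀ ≠ 0 := by
    intro h
    have := hx₀K.2
    simp [h, Metric.mem_ball, hε] at this
  have hδpos : 0 < δ := hdiss x₀ hx₀ne
  -- integrability
  have hXKcont : ContinuousOn (fun s => g (X s)) (Set.Ici 0) :=
    hgcont.comp_continuousOn hX
  have hint : ∀ a b : ℝ, 0 ≤ a → 0 ≤ b →
      IntervalIntegrable (fun s => g (X s)) volume a b := by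
    intro a b ha hb
    apply (hXKcont.mono _).intervalIntegrable
    intro s hs
    rcases Set.mem_uIcc.mp hs with ⟨h1, _⟩ | ⟨h1, _⟩
    · exact le_trans ha h1
    · exact le_trans hb h1
  -- lower bound for the averages
  have hlow : ∀ t, T ≤ t → δ * (t - T) ≤ ∫ s in (0:ℝ)..t, g (X s) := by
    intro t ht
    have ht0 : (0:ℝ) ≤ t := le_trans hT0 ht
    have hsplit : (∫ s in (0:ℝ)..T, g (X s)) + (∫ s in T..t, g (X s))
        = ∫ s in (0:ℝ)..t, g (X s) :=
      intervalIntegral.integral_add_adjacent_intervals (hint 0 T le_rfl hT0)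
        (hint T t hT0 ht0)
    have h1 : 0 ≤ ∫ s in (0:ℝ)..T, g (X s) :=
      intervalIntegral.integral_nonneg hT0 (fun s _ => hgnonneg _)
    have h2 : δ * (t - T) ≤ ∫ s in T..t, g (X s) := by
      have := intervalIntegral.integral_mono_on ht
        (intervalIntegrable_const (c := δ)) (hint T t hT0 ht0)
        (fun s hs => hmin (hmemK s hs.1))
      simpa [mul_comm] using this
    linarith
  -- tendsto of the comparison function
  have haux : Tendsto (fun t : ℝ => δ - δ * T / t) atTop (nhds δ) := by
    have : Tendsto (fun t : ℝ => δ * T / t) atTop (nhds 0) :=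
      tendsto_const_nhds.div_atTop tendsto_id
    simpa using tendsto_const_nhds.sub this
  have haux' : Tendsto (fun t : ℝ => (1 / t) * (δ * (t - T))) atTop (nhds δ) := by
    apply haux.congr'
    filter_upwards [eventually_gt_atTop (0:ℝ)] with t ht
    field_simp
  have hle : δ ≤ 0 := by
    apply le_of_tendsto_of_tendsto haux' havg
    filter_upwards [eventually_gt_atTop (0:ℝ), eventually_ge_atTop T] with t ht hTt
    have := hlow t hTt
    have h1t : (0:ℝ) < 1 / t := by positivity
    calc (1 / t) * (δ * (t - T)) ≤ (1 / t) * ∫ s in (0:ℝ)..t, g (X s) := by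
          apply mul_le_mul_of_nonneg_left this h1t.le
      _ = (1 / t) * ∫ s in (0:ℝ)..t, (inner ℝ (X s) (f (X s)) : ℝ) := rfl
  linarith
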